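/- arXiv:1612.03257 — 5 statements merged into one kernel-verified Lean document; each statement's English description precedes it below -/
import Mathlib

section
/- Let κ be a Markov kernel from a measurable space 𝒳 to a measurable space 𝒴, Θ a set, and ψ : Θ × 𝒴 × 𝒳 → ℝ^k measurable with ψ(θ, ·, ·) integrable with respect to κ_x for all θ, x and with respect to μ ⊗ κ for all probability measures μ on 𝒳. Suppose that for every probability measure μ on 𝒳 there is exactly one θ(μ) ∈ Θ with ∫∫ ψ(θ(μ), y, x) κ_x(dy) μ(dx) = 0. Then θ(μ) takes the same value θ₀ for all probability measures μ on 𝒳 if and only if there exists θ₀ ∈ Θ such that ∫ ψ(θ₀, y, x) κ_x(dy) = 0 for every x ∈ 𝒳. -/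
open MeasureTheory ProbabilityTheory

/-- An EE regression functional is well-specified for the conditional response
distribution `κ` iff the estimating equations hold conditionally at a single `θ₀`
across all of regressor space. -/
theorem stmt_2 {𝒳 𝒴 Θ : Type*} [MeasurableSpace 𝒳] [MeasurableSpace 𝒴]
    (κ : Kernel 𝒳 𝒴) [IsMarkovKernel κ] (k : ℕ)
    (ψ : Θ → 𝒴 → 𝒳 → EuclideanSpace ℝ (Fin k))
    (hψ_meas : ∀ θ, Measurable (fun p : 𝒴 × 𝒳 => ψ θ p.1 p.2))
    (hψ_int : ∀ θ x, Integrable (fun y => ψ θ y x) (κ x))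
    (hψ_int' : ∀ θ (μ : Measure 𝒳) [IsProbabilityMeasure μ],
      Integrable (fun x => ∫ y, ψ θ y x ∂(κ x)) μ)
    -- the EE functional: for every regressor distribution there is exactly one solution
    (T : Measure 𝒳 → Θ)
    (hT_sol : ∀ (μ : Measure 𝒳) [IsProbabilityMeasure μ],
      ∫ x, ∫ y, ψ (T μ) y x ∂(κ x) ∂μ = 0)
    (hT_unique : ∀ (μ : Measure 𝒳) [IsProbabilityMeasure μ], ∀ θ : Θ,
      ∫ x, ∫ y, ψ θ y x ∂(κ x) ∂μ = 0 → θ = T μ) :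
    (∃ θ₀ : Θ, ∀ (μ : Measure 𝒳) [IsProbabilityMeasure μ], T μ = θ₀) ↔
      (∃ θ₀ : Θ, ∀ x : 𝒳, ∫ y, ψ θ₀ y x ∂(κ x) = 0) := by
  have hg : ∀ θ, StronglyMeasurable (fun x => ∫ y, ψ θ y x ∂(κ x)) := by
    intro θ
    exact (hψ_meas θ).stronglyMeasurable.comp_measurable
      measurable_swap |>.integral_kernel_prod_right'
  constructor
  · rintro ⟨θ₀, hθ₀⟩
    refine ⟨θ₀, fun x => ?_⟩
    have h := hT_sol (Measure.dirac x)
    rw [hθ₀ (Measure.dirac x)] at h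
    rwa [integral_dirac' _ x (hg θ₀)] at h
  · rintro ⟨θ₀, hθ₀⟩
    refine ⟨θ₀, fun μ _ => ?_⟩
    exact (hT_unique μ θ₀ (by simp [hθ₀])).symm
end

section
/- Let κ be a Markov kernel from a measurable space 𝒳 to a measurable space 𝒴, μ a probability measure on 𝒳, P = μ ⊗ κ the joint distribution, and θ(·) a real-valued functional on probability measures on 𝒳 × 𝒴. Suppose there is a measurable function ψ : 𝒳 × 𝒴 → ℝ, integrable under μ ⊗ κ and under κ_x for each x, with ∫ ψ dP = 0, such that for every probability measure P' on 𝒳 × 𝒴 in the admissible class the map t ↦ θ((1−t)P + tP') is differentiable at t = 0 with derivative ∫ ψ dP'. Then for every x ∈ 𝒳 with δ_x ⊗ κ admissible, the map t ↦ θ(((1−t)μ + tδ_x) ⊗ κ) is differentiable at t = 0 with derivative equal to ∫ ψ(x, y) κ_x(dy); that is, the partial influence function with respect to the regressor distribution equals the conditional expectation of the full influence function given X = x. -/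
open MeasureTheory ProbabilityTheory

/-- The convex mixture `(1-t)·P + t·P'` of two measures, defined for real `t`. -/
noncomputable def mixM {Z : Type*} [MeasurableSpace Z] (P P' : Measure Z) (t : ℝ) :
    Measure Z :=
  ENNReal.ofReal (1 - t) • P + ENNReal.ofReal t • P'

lemma dirac_compProd_eq_map {𝒳 𝒴 : Type*} [MeasurableSpace 𝒳] [MeasurableSpace 𝒴]
    (κ : Kernel 𝒳 𝒴) [IsMarkovKernel κ] (x : 𝒳) :
    (Measure.dirac x).compProd κ = (κ x).map (fun y => (x, y)) := by
  ext s hs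
  rw [Measure.compProd_apply hs,
    lintegral_dirac' _ (Kernel.measurable_kernel_prodMk_left hs),
    Measure.map_apply measurable_prodMk_left hs]

lemma mixM_compProd {𝒳 𝒴 : Type*} [MeasurableSpace 𝒳] [MeasurableSpace 𝒴]
    (κ : Kernel 𝒳 𝒴) [IsMarkovKernel κ]
    (μ ν : Measure 𝒳) [SFinite μ] [SFinite ν] (t : ℝ) :
    (mixM μ ν t).compProd κ = mixM (μ.compProd κ) (ν.compProd κ) t := by
  simp only [mixM]
  rw [Measure.compProd_add_left, Measure.compProd_smul_left, Measure.compProd_smul_left]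

/-- The partial influence function with regard to the regressor distribution equals the
conditional expectation of the full influence function given `X = x`. -/
theorem stmt_3 {𝒳 𝒴 : Type*} [MeasurableSpace 𝒳] [MeasurableSpace 𝒴]
    (κ : Kernel 𝒳 𝒴) [IsMarkovKernel κ]
    (μ : Measure 𝒳) [IsProbabilityMeasure μ]
    (θ : Measure (𝒳 × 𝒴) → ℝ)
    (𝒜 : Set (Measure (𝒳 × 𝒴)))
    (h𝒜 : ∀ P' ∈ 𝒜, IsProbabilityMeasure P')
    (ψ : 𝒳 × 𝒴 → ℝ)
    (hψ_meas : Measurable ψ)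
    (hψ_int : Integrable ψ (μ.compProd κ))
    (hψ_int' : ∀ x, Integrable (fun y => ψ (x, y)) (κ x))
    (hψ_mean : ∫ p, ψ p ∂(μ.compProd κ) = 0)
    (hIC : ∀ P' ∈ 𝒜,
      HasDerivAt (fun t => θ (mixM (μ.compProd κ) P' t)) (∫ p, ψ p ∂P') 0) :
    ∀ x : 𝒳, (Measure.dirac x).compProd κ ∈ 𝒜 →
      HasDerivAt (fun t => θ ((mixM μ (Measure.dirac x) t).compProd κ))
        (∫ y, ψ (x, y) ∂(κ x)) 0 := by
  intro x hx
  have h := hIC _ hx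
  have hint : ∫ p, ψ p ∂((Measure.dirac x).compProd κ) = ∫ y, ψ (x, y) ∂(κ x) := by
    rw [dirac_compProd_eq_map,
      integral_map measurable_prodMk_left.aemeasurable hψ_meas.aestronglyMeasurable]
  rw [hint] at h
  convert h using 2 with t
  rw [mixM_compProd]
end

section
/- Let κ be a Markov kernel from a measurable space 𝒳 to a measurable space 𝒴 and θ(·) a real-valued functional on joint probability measures on 𝒳 × 𝒴. Suppose there is a function ic : 𝒳 × 𝒫(𝒳) → ℝ (where 𝒫(𝒳) is the set of probability measures on 𝒳) such that (i) ∫ ic(x, ν) ν(dx) = 0 for all ν, (ii) for all probability measures μ, μ' on 𝒳 the map g(t) := θ(((1−t)μ + tμ') ⊗ κ) is differentiable on [0,1] with g'(t) = ∫ ic(x, (1−t)μ + tμ') μ'(dx), and (iii) ic(x, ν) = (d/dt)|_{t=0} θ(((1−t)ν + tδ_x) ⊗ κ) for all x, ν. Then θ is well-specified for κ (i.e., θ(μ ⊗ κ) = θ(μ' ⊗ κ) for all probability measures μ, μ' on 𝒳) if and only if ic(x, ν) = 0 for all x ∈ 𝒳 and all probability measures ν on 𝒳. -/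
open MeasureTheory ProbabilityTheory

lemma mixM_zero {Z : Type*} [MeasurableSpace Z] (P P' : Measure Z) :
    mixM P P' 0 = P := by
  simp [mixM]

lemma mixM_one {Z : Type*} [MeasurableSpace Z] (P P' : Measure Z) :
    mixM P P' 1 = P' := by
  simp [mixM]

lemma mixM_prob {Z : Type*} [MeasurableSpace Z] (P P' : Measure Z)
    [IsProbabilityMeasure P] [IsProbabilityMeasure P'] {t : ℝ}
    (ht : t ∈ Set.Icc (0 : ℝ) 1) : IsProbabilityMeasure (mixM P P' t) := by
  constructor
  have h1 : (0:ℝ) ≤ 1 - t := by linarith [ht.2]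
  simp [mixM, ← ENNReal.ofReal_add h1 ht.1]

/-- A regression functional with partial influence function `ic` (with regard to the
regressor distribution) is well-specified for `κ` iff `ic` vanishes identically. -/
theorem stmt_4 {𝒳 𝒴 : Type*} [MeasurableSpace 𝒳] [MeasurableSpace 𝒴]
    (κ : Kernel 𝒳 𝒴) [IsMarkovKernel κ]
    (θ : Measure (𝒳 × 𝒴) → ℝ)
    (ic : 𝒳 → Measure 𝒳 → ℝ)
    -- (i) the partial influence function integrates to zero
    (h_mean : ∀ (ν : Measure 𝒳) [IsProbabilityMeasure ν], ∫ x, ic x ν ∂ν = 0)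
    -- (ii) differentiability along mixture segments, with derivative given by `ic`
    (h_deriv : ∀ (μ μ' : Measure 𝒳) [IsProbabilityMeasure μ] [IsProbabilityMeasure μ'],
      ∀ t ∈ Set.Icc (0 : ℝ) 1,
        HasDerivAt (fun s => θ ((mixM μ μ' s).compProd κ))
          (∫ x, ic x (mixM μ μ' t) ∂μ') t)
    -- (iii) `ic` is the derivative at 0 in the directions of point masses
    (h_ic : ∀ (x : 𝒳) (ν : Measure 𝒳) [IsProbabilityMeasure ν],
      HasDerivAt (fun t => θ ((mixM ν (Measure.dirac x) t).compProd κ)) (ic x ν) 0) :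
    (∀ (μ μ' : Measure 𝒳) [IsProbabilityMeasure μ] [IsProbabilityMeasure μ'],
        θ (μ.compProd κ) = θ (μ'.compProd κ)) ↔
      (∀ (x : 𝒳) (ν : Measure 𝒳) [IsProbabilityMeasure ν], ic x ν = 0) := by
  constructor
  · intro h x ν _
    set f : ℝ → ℝ := fun t => θ ((mixM ν (Measure.dirac x) t).compProd κ) with hf
    have hconst : ∀ t ∈ Set.Icc (0:ℝ) 1, f t = θ (ν.compProd κ) := by
      intro t ht
      have := mixM_prob ν (Measure.dirac x) ht
      exact h (mixM ν (Measure.dirac x) t) ν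
    have h0mem : (0:ℝ) ∈ Set.Icc (0:ℝ) 1 := by constructor <;> norm_num
    have hd1 : HasDerivWithinAt f (ic x ν) (Set.Icc (0:ℝ) 1) 0 :=
      (h_ic x ν).hasDerivWithinAt
    have hd2 : HasDerivWithinAt f 0 (Set.Icc (0:ℝ) 1) 0 :=
      (hasDerivWithinAt_const (0:ℝ) (Set.Icc (0:ℝ) 1)
        (θ (ν.compProd κ))).congr hconst (hconst 0 h0mem)
    have hu : UniqueDiffWithinAt ℝ (Set.Icc (0:ℝ) 1) 0 :=
      (uniqueDiffOn_Icc one_pos) 0 h0mem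
    have := hd1.derivWithin hu
    rw [hd2.derivWithin hu] at this
    exact this.symm
  · intro h μ μ' _ _
    set f : ℝ → ℝ := fun s => θ ((mixM μ μ' s).compProd κ) with hf
    have hd : ∀ t ∈ Set.Icc (0:ℝ) 1, HasDerivAt f 0 t := by
      intro t ht
      have hp := mixM_prob μ μ' ht
      have : (∫ x, ic x (mixM μ μ' t) ∂μ') = 0 := by
        simp [h _ (mixM μ μ' t)]
      exact this ▸ h_deriv μ μ' t ht
    have key : ∀ t ∈ Set.Icc (0:ℝ) 1, f t = f 0 := by
      apply constant_of_has_deriv_right_zero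
      · exact fun t ht => ((hd t ht).continuousAt).continuousWithinAt
      · exact fun t ht => ((hd t (Set.Ico_subset_Icc_self ht)).hasDerivWithinAt)
    have h1 : f 1 = f 0 := key 1 (by constructor <;> norm_num)
    have := h1
    rw [hf] at this
    simp only [mixM_zero, mixM_one] at this
    exact this.symm
end

section
/- Let κ be a Markov kernel from a measurable space 𝒳 to a measurable space 𝒴, let 𝒜 be a class of probability measures on 𝒳, and let θ(·) be a functional on joint probability measures on 𝒳 × 𝒴 that is well-specified for κ on 𝒜, i.e., θ(μ ⊗ κ) = θ(μ' ⊗ κ) for all μ, μ' ∈ 𝒜. Then for every μ ∈ 𝒜 and every measurable weight w : 𝒳 → [0,∞) with ∫ w dμ = 1 and w·μ ∈ 𝒜, the functional is unchanged under reweighting of the joint distribution by w(x): θ evaluated at the measure with density (x,y) ↦ w(x) with respect to μ ⊗ κ equals θ(μ ⊗ κ). -/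
open MeasureTheory ProbabilityTheory
open scoped NNReal ENNReal

/-- A regression functional that is well-specified for `κ` is unchanged under
reweighting of the joint distribution by a weight function of the regressors. -/
theorem stmt_6 {𝒳 𝒴 : Type*} [MeasurableSpace 𝒳] [MeasurableSpace 𝒴]
    (κ : Kernel 𝒳 𝒴) [IsMarkovKernel κ]
    (𝒜 : Set (Measure 𝒳))
    (h𝒜 : ∀ μ ∈ 𝒜, IsProbabilityMeasure μ)
    (θ : Measure (𝒳 × 𝒴) → ℝ)
    (h_wellspec : ∀ μ ∈ 𝒜, ∀ μ' ∈ 𝒜, θ (μ.compProd κ) = θ (μ'.compProd κ)) :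
    ∀ μ ∈ 𝒜, ∀ w : 𝒳 → ℝ≥0, Measurable w →
      ∫⁻ x, (w x : ℝ≥0∞) ∂μ = 1 →
      μ.withDensity (fun x => (w x : ℝ≥0∞)) ∈ 𝒜 →
      θ ((μ.compProd κ).withDensity (fun p : 𝒳 × 𝒴 => (w p.1 : ℝ≥0∞))) =
        θ (μ.compProd κ) := by
  intro μ hμ w hw hint hmem
  haveI : IsProbabilityMeasure μ := h𝒜 μ hμ
  have hwm : Measurable (fun x => (w x : ℝ≥0∞)) := hw.coe_nnreal_ennreal
  have key : (μ.compProd κ).withDensity (fun p : 𝒳 × 𝒴 => (w p.1 : ℝ≥0∞)) =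
      (μ.withDensity (fun x => (w x : ℝ≥0∞))).compProd κ := by
    ext s hs
    rw [withDensity_apply _ hs, Measure.compProd_apply hs]
    rw [lintegral_withDensity_eq_lintegral_mul _ hwm
      (Kernel.measurable_kernel_prodMk_left hs)]
    rw [← lintegral_indicator hs _,
      Measure.lintegral_compProd ((show Measurable fun p : 𝒳 × 𝒴 => (w p.1 : ℝ≥0∞) from (hw.comp measurable_fst).coe_nnreal_ennreal).indicator hs)]
    congr 1
    ext x
    simp only [Pi.mul_apply]
    have h1 : ∀ y, s.indicator (fun p : 𝒳 × 𝒴 => (w p.1 : ℝ≥0∞)) (x, y) =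
        (Prod.mk x ⁻¹' s).indicator (fun _ => (w x : ℝ≥0∞)) y := by
      intro y
      by_cases hy : (x, y) ∈ s <;> simp [Set.indicator, hy, Set.mem_preimage]
    simp_rw [h1]
    rw [lintegral_indicator_const (measurable_prodMk_left hs) _]
  rw [key]
  exact h_wellspec _ hmem _ hμ
end

section
/- Let κ be a Markov kernel from ℝ^p (with Borel σ-algebra) to ℝ with conditional mean m(x) := ∫ y κ_x(dy), assumed finite for all x, and let β₀ ∈ ℝ^p. Suppose that the normal equations hold at β₀ for every acceptable regressor distribution: ∫ x (m(x) − β₀ᵀx) μ(dx) = 0 for every finitely supported probability measure μ on ℝ^p whose second-moment matrix ∫ x xᵀ μ(dx) is invertible. Then m(x) = β₀ᵀx for every x ∈ ℝ^p with x ≠ 0. -/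
open MeasureTheory ProbabilityTheory
open scoped NNReal ENNReal

section Aux

variable {E : Type*} [MeasurableSpace E] [MeasurableSingletonClass E]

lemma stmt12_integrable_dirac (f : E → ℝ) (a : E) : Integrable f (Measure.dirac a) := by
  have h : f =ᵐ[Measure.dirac a] fun _ => f a := by
    rw [MeasureTheory.ae_dirac_eq]
    exact Filter.eventually_pure.2 rfl
  exact (integrable_const (f a)).congr h.symm

lemma stmt12_integral_fin_sum {n : ℕ} (pts : Fin n → E) (w : Fin n → ℝ≥0∞)
    (hw : ∀ i, w i ≠ ∞) (f : E → ℝ) :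
    ∫ z, f z ∂(∑ i : Fin n, w i • Measure.dirac (pts i))
      = ∑ i : Fin n, (w i).toReal * f (pts i) := by
  rw [integral_finset_sum_measure
    (fun i _ => (stmt12_integrable_dirac f (pts i)).smul_measure (hw i))]
  refine Finset.sum_congr rfl fun i _ => ?_
  rw [integral_smul_measure, integral_dirac, smul_eq_mul]

end Aux

/-- If the normal equations hold at `β₀` under every acceptable (non-collinear) finitely
supported regressor distribution, the conditional mean function is linear with slope
`β₀` away from the origin. -/
theorem stmt_12 {p : ℕ}
    (κ : Kernel (EuclideanSpace ℝ (Fin p)) ℝ) [IsMarkovKernel κ]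
    (hκ_int : ∀ x, Integrable (fun y => y) (κ x))
    (β₀ : EuclideanSpace ℝ (Fin p))
    (h_normal : ∀ (n : ℕ) (pts : Fin n → EuclideanSpace ℝ (Fin p)) (w : Fin n → ℝ≥0∞),
      (∑ i : Fin n, w i) = 1 →
      IsUnit (Matrix.of fun j k =>
        ∫ x, x j * x k ∂(∑ i : Fin n, w i • Measure.dirac (pts i))).det →
      ∀ j : Fin p,
        ∫ x, x j * ((∫ y, y ∂(κ x)) - ∑ i, β₀ i * x i)
          ∂(∑ i : Fin n, w i • Measure.dirac (pts i)) = 0) :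
    ∀ x : EuclideanSpace ℝ (Fin p), x ≠ 0 → ∫ y, y ∂(κ x) = ∑ i, β₀ i * x i := by
  classical
  intro x hx
  have hxj : ∃ j : Fin p, x j ≠ 0 := by
    by_contra h
    push_neg at h
    exact hx (by ext j; exact h j)
  obtain ⟨j0, hj0⟩ := hxj
  have hp : 0 < p := j0.pos
  have hpR : (0:ℝ) < (p:ℝ) := Nat.cast_pos.2 hp
  set g : EuclideanSpace ℝ (Fin p) → ℝ :=
    fun z => (∫ y, y ∂(κ z)) - ∑ i, β₀ i * z i with hg
  set e : Fin p → EuclideanSpace ℝ (Fin p) := fun k => EuclideanSpace.single k 1 with he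
  have key : ∀ t : ℝ, 0 < t → t < 1 →
      t * (x j0 * g x) + ((1 - t)/p) * g (e j0) = 0 := by
    intro t ht0 ht1
    set c : ℝ := (1 - t)/p with hc
    have hc0 : 0 < c := div_pos (by linarith) hpR
    set pts : Fin (p+1) → EuclideanSpace ℝ (Fin p) := Fin.cons x e with hpts
    set w : Fin (p+1) → ℝ≥0∞ := Fin.cons (ENNReal.ofReal t) (fun _ => ENNReal.ofReal c)
      with hw
    have hwne : ∀ i, w i ≠ ∞ := by
      intro i
      refine Fin.cases ?_ (fun k => ?_) i <;> simp [hw]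
    have hwt : ∀ i, (w i).toReal = (Fin.cons t (fun _ => c) : Fin (p+1) → ℝ) i := by
      intro i
      refine Fin.cases ?_ (fun k => ?_) i <;>
        simp [hw, ENNReal.toReal_ofReal, ht0.le, hc0.le]
    have hsum : (∑ i : Fin (p+1), w i) = 1 := by
      rw [hw, Fin.sum_cons]
      simp only [Finset.sum_const, Finset.card_univ, Fintype.card_fin, nsmul_eq_mul]
      rw [← ENNReal.ofReal_natCast, ← ENNReal.ofReal_mul (Nat.cast_nonneg p)]
      rw [hc, mul_div_cancel₀ _ (ne_of_gt hpR)]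
      rw [← ENNReal.ofReal_add ht0.le (by linarith), show t + (1 - t) = 1 by ring,
        ENNReal.ofReal_one]
    -- entries of the second-moment matrix
    have hentry : ∀ j k : Fin p,
        (∫ z, z j * z k ∂(∑ i : Fin (p+1), w i • Measure.dirac (pts i)))
          = t * (x j * x k) + c * (if j = k then 1 else 0) := by
      intro j k
      have hsum2 : (∑ i : Fin p, c * (e i j * e i k)) = c * (if j = k then 1 else 0) := by
        have hterm : ∀ i : Fin p, c * (e i j * e i k)
            = if j = i then c * (if k = i then 1 else 0) else 0 := by
          intro i
          by_cases h : j = i <;> simp [he, EuclideanSpace.single_apply, h]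
        rw [Finset.sum_congr rfl fun i _ => hterm i, Finset.sum_ite_eq]
        by_cases h : j = k
        · simp [h]
        · simp [h, if_neg (Ne.symm h)]
      rw [stmt12_integral_fin_sum pts w hwne (fun z => z j * z k)]
      rw [Fin.sum_univ_succ]
      simp only [hwt, hpts, Fin.cons_zero, Fin.cons_succ]
      rw [hsum2]
    have hdet : IsUnit (Matrix.of fun j k =>
        ∫ z, z j * z k ∂(∑ i : Fin (p+1), w i • Measure.dirac (pts i))).det := by
      rw [isUnit_iff_ne_zero]
      intro hdet0
      obtain ⟨v, hv0, hMv⟩ := Matrix.exists_mulVec_eq_zero_iff.2 hdet0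
      have hMv' : ∀ j : Fin p,
          t * x j * (∑ k, x k * v k) + c * v j = 0 := by
        intro j
        have hthis := congrFun hMv j
        rw [Matrix.mulVec, dotProduct] at hthis
        simp only [Matrix.of_apply, hentry, Pi.zero_apply] at hthis
        have expand : ∀ k' : Fin p, (t * (x j * x k') + c * (if j = k' then 1 else 0)) * v k'
            = t * x j * (x k' * v k') + (if j = k' then c * v k' else 0) := by
          intro k'
          by_cases h : j = k' <;> simp [h] <;> ring
        rw [Finset.sum_congr rfl fun k' _ => expand k', Finset.sum_add_distrib,
          ← Finset.mul_sum, Finset.sum_ite_eq] at hthis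
        simpa using hthis
      -- dot with v
      have hquad : t * (∑ k, x k * v k)^2 + c * (∑ k, (v k)^2) = 0 := by
        have h0 : ∑ j, v j * (t * x j * (∑ k, x k * v k) + c * v j) = 0 :=
          Finset.sum_eq_zero fun j _ => by rw [hMv' j, mul_zero]
        calc t * (∑ k, x k * v k)^2 + c * (∑ k, (v k)^2)
            = ∑ j, v j * (t * x j * (∑ k, x k * v k) + c * v j) := by
              have hterm : ∀ j : Fin p, v j * (t * x j * (∑ k, x k * v k) + c * v j)
                  = t * (∑ k, x k * v k) * (x j * v j) + c * (v j)^2 := by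
                intro j; ring
              rw [Finset.sum_congr rfl fun j _ => hterm j, Finset.sum_add_distrib,
                ← Finset.mul_sum, ← Finset.mul_sum]
              ring
          _ = 0 := h0
      have h1 : 0 ≤ t * (∑ k, x k * v k)^2 := mul_nonneg ht0.le (sq_nonneg _)
      have h2 : 0 ≤ c * (∑ k, (v k)^2) :=
        mul_nonneg hc0.le (Finset.sum_nonneg fun k _ => sq_nonneg _)
      have h3 : c * (∑ k, (v k)^2) = 0 := by linarith
      have h4 : (∑ k, (v k)^2) = 0 := by
        rcases mul_eq_zero.1 h3 with h | h
        · exact absurd h (ne_of_gt hc0)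
        · exact h
      have h5 : ∀ k : Fin p, v k = 0 := by
        intro k
        have := (Finset.sum_eq_zero_iff_of_nonneg fun k _ => sq_nonneg (v k)).1 h4 k
          (Finset.mem_univ k)
        exact pow_eq_zero_iff (n := 2) (by norm_num) |>.1 this
      exact hv0 (funext h5)
    have hne := h_normal (p+1) pts w hsum hdet j0
    rw [stmt12_integral_fin_sum pts w hwne
      (fun z => z j0 * ((∫ y, y ∂(κ z)) - ∑ i, β₀ i * z i))] at hne
    rw [Fin.sum_univ_succ] at hne
    simp only [hwt, Fin.cons_zero, Fin.cons_succ, hpts] at hne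
    have hesum : (∑ k : Fin p, c * (e k j0 * g (e k))) = c * g (e j0) := by
      rw [Finset.sum_eq_single j0 ?_ (by simp)]
      · simp [he, EuclideanSpace.single_apply]
      · intro b _ hb
        simp [he, EuclideanSpace.single_apply, if_neg (Ne.symm hb)]
    rw [show (∑ i : Fin p, c * (e i j0 * ((∫ y, y ∂(κ (e i))) - ∑ k, β₀ k * (e i) k)))
        = ∑ k : Fin p, c * (e k j0 * g (e k)) from rfl, hesum] at hne
    calc t * (x j0 * g x) + (1 - t)/p * g (e j0)
        = t * (x j0 * ((∫ y, y ∂(κ x)) - ∑ i, β₀ i * x i)) + c * g (e j0) := by rw [hc, hg]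
      _ = 0 := hne
  have k1 := key (1/2) (by norm_num) (by norm_num)
  have k2 := key (1/3) (by norm_num) (by norm_num)
  set a : ℝ := x j0 * g x with ha
  set q : ℝ := g (e j0) / (p:ℝ) with hq
  have k1' : (1/2) * a + (1/2) * q = 0 := by
    rw [ha, hq]
    linear_combination k1
  have k2' : (1/3) * a + (2/3) * q = 0 := by
    rw [ha, hq]
    linear_combination k2
  have ha0 : a = 0 := by linarith
  have hgx : g x = 0 := by
    rcases mul_eq_zero.1 ha0 with h | h
    · exact absurd h hj0
    · exact h
  have := sub_eq_zero.1 hgx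
  exact this
end
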